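/- Let {s_a, p_A} be a representation of the labeled space (E,L,𝔅̄) in a C*-algebra such that p_C ≠ 0 for every nonempty C ∈ 𝔅̄ and such that no projection p_B, B ∈ 𝔅̄, is infinite. Suppose A ∈ 𝔅̄ admits a loop. Then there exists a loop α at A such that A = r(A,α) and L(AE^{≥1}) = {α^k α' : k ≥ 0, α' an initial segment of α}. -/

import Mathlib

/-! # Common framework for labeled graph C*-algebras

Directed graphs, finite paths, labeled spaces `(E, L, 𝔅̄)` where `𝔅̄` is the
smallest accommodating set closed under relative complements (and containing
the sink parts of its members), loops and generalized loops, representations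
of labeled spaces in C*-algebras, gauge actions, infinite projections,
AF algebras, and closed two-sided ideals. -/

noncomputable section

/-- A directed graph with vertex set `V` and edge set `E`. -/
structure DirGraph (V : Type*) (E : Type*) where
  src : E → V
  rng : E → V

variable {V E 𝒜 : Type*}

/-- A (finite) path of positive length in a directed graph: a nonempty list of
composable edges. -/
structure GPath (G : DirGraph V E) where
  edges : List E
  ne : edges ≠ []
  chain : edges.Chain' fun e f => G.rng e = G.src f

namespace GPath

variable {G : DirGraph V E}

/-- The source vertex of a path. -/
def source (p : GPath G) : V := G.src (p.edges.head p.ne)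

/-- The range vertex of a path. -/
def range (p : GPath G) : V := G.rng (p.edges.getLast p.ne)

/-- The length of a path. -/
def length (p : GPath G) : ℕ := p.edges.length

/-- The label word of a path under a labeling `L`. -/
def label (L : E → 𝒜) (p : GPath G) : List 𝒜 := p.edges.map L

end GPath

/-- The set of sinks of a graph (vertices emitting no edge). -/
def DirGraph.sinks (G : DirGraph V E) : Set V := {v | ∀ e, G.src e ≠ v}

/-- `w ∈ L*(E)`: `w` is the label of some path of positive length. -/
def IsLabelWord (G : DirGraph V E) (L : E → 𝒜) (w : List 𝒜) : Prop :=
  ∃ p : GPath G, p.label L = w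

/-- The range `r(w)` of a labeled path `w`. -/
def rngW (G : DirGraph V E) (L : E → 𝒜) (w : List 𝒜) : Set V :=
  {v | ∃ p : GPath G, p.label L = w ∧ p.range = v}

/-- The relative range `r(A, w)` of a labeled path `w` with respect to `A`. -/
def relRng (G : DirGraph V E) (L : E → 𝒜) (A : Set V) (w : List 𝒜) : Set V :=
  {v | ∃ p : GPath G, p.label L = w ∧ p.source ∈ A ∧ p.range = v}

/-- `L(A E^n)`: labels of paths of length exactly `n` with source in `A`. -/
def labelsFromLen (G : DirGraph V E) (L : E → 𝒜) (A : Set V) (n : ℕ) : Set (List 𝒜) :=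
  {w | ∃ p : GPath G, p.source ∈ A ∧ p.length = n ∧ p.label L = w}

/-- `L(A E^{≤n})`: labels of paths of length between `1` and `n` with source in `A`. -/
def labelsFromLe (G : DirGraph V E) (L : E → 𝒜) (A : Set V) (n : ℕ) : Set (List 𝒜) :=
  {w | ∃ p : GPath G, p.source ∈ A ∧ p.length ≤ n ∧ p.label L = w}

/-- `L(A E^{≥n})`: labels of paths of length at least `n` (and at least `1`)
with source in `A`. -/
def labelsFromGe (G : DirGraph V E) (L : E → 𝒜) (A : Set V) (n : ℕ) : Set (List 𝒜) :=
  {w | ∃ p : GPath G, p.source ∈ A ∧ n ≤ p.length ∧ p.label L = w}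

/-- `L(E^n A)`: labels of paths of length exactly `n` with range in `A`. -/
def labelsToLen (G : DirGraph V E) (L : E → 𝒜) (n : ℕ) (A : Set V) : Set (List 𝒜) :=
  {w | ∃ p : GPath G, p.range ∈ A ∧ p.length = n ∧ p.label L = w}

/-- `L(E^{≤l} v)`: labels of paths of length between `1` and `l` with range `v`. -/
def labelsToLe (G : DirGraph V E) (L : E → 𝒜) (l : ℕ) (v : V) : Set (List 𝒜) :=
  {w | ∃ p : GPath G, p.range = v ∧ p.length ≤ l ∧ p.label L = w}

/-- `𝔅̄`: the smallest accommodating set for `(E, L)` (containing the ranges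
`r(α)` for `α ∈ L*(E)` and closed under relative ranges, finite intersections
and finite unions) that is moreover closed under relative complements and
contains `A_sk = A ∩ sinks` for every `A` belonging to it. -/
inductive Bbar (G : DirGraph V E) (L : E → 𝒜) : Set V → Prop
  | base (w : List 𝒜) (hw : IsLabelWord G L w) : Bbar G L (rngW G L w)
  | rel (A : Set V) (w : List 𝒜) (hA : Bbar G L A) (hw : IsLabelWord G L w) :
      Bbar G L (relRng G L A w)
  | inter (A B : Set V) (hA : Bbar G L A) (hB : Bbar G L B) : Bbar G L (A ∩ B)
  | union (A B : Set V) (hA : Bbar G L A) (hB : Bbar G L B) : Bbar G L (A ∪ B)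
  | diff (A B : Set V) (hA : Bbar G L A) (hB : Bbar G L B) : Bbar G L (A \ B)
  | sk (A : Set V) (hA : Bbar G L A) : Bbar G L (A ∩ G.sinks)

/-- The standing assumptions on a labeled space `(E, L, 𝔅̄)`: weakly
left-resolving, set-finite, receiver set-finite, and no sink is a source. -/
structure StandingAssumptions (G : DirGraph V E) (L : E → 𝒜) : Prop where
  wlr : ∀ A B : Set V, Bbar G L A → Bbar G L B → ∀ w : List 𝒜, IsLabelWord G L w →
    relRng G L A w ∩ relRng G L B w = relRng G L (A ∩ B) w
  setFinite : ∀ A : Set V, Bbar G L A → ∀ n : ℕ, 1 ≤ n → (labelsFromLen G L A n).Finite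
  receiverSetFinite : ∀ A : Set V, Bbar G L A → ∀ n : ℕ, 1 ≤ n → (labelsToLen G L n A).Finite
  sinkNotSource : ∀ v ∈ G.sinks, ∃ e, G.rng e = v

/-- The `n`-fold concatenation `w^n` of a word `w`. -/
def wordPow (w : List 𝒜) (n : ℕ) : List 𝒜 := (List.replicate n w).flatten

/-- A labeled path is repeatable if all its powers `w^n`, `n ≥ 1`, are again
labeled paths. -/
def Repeatable (G : DirGraph V E) (L : E → 𝒜) (w : List 𝒜) : Prop :=
  ∀ n : ℕ, 1 ≤ n → IsLabelWord G L (wordPow w n)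

/-- The generalized vertex `[v]_l`: all non-source vertices receiving exactly
the same labeled paths of length at most `l` as `v` does. -/
def gvtx (G : DirGraph V E) (L : E → 𝒜) (l : ℕ) (v : V) : Set V :=
  {u | (∃ e, G.rng e = u) ∧ labelsToLe G L l u = labelsToLe G L l v}

/-- A generalized loop at `A`: a labeled path `α ∈ L(A E^{≥1} A)`. -/
def IsGenLoop (G : DirGraph V E) (L : E → 𝒜) (A : Set V) (α : List 𝒜) : Prop :=
  ∃ p : GPath G, p.label L = α ∧ p.source ∈ A ∧ p.range ∈ A

/-- A loop at `A`: a generalized loop `α` at `A` such that `A ⊆ r(A, α)`. -/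
def IsLoop (G : DirGraph V E) (L : E → 𝒜) (A : Set V) (α : List 𝒜) : Prop :=
  IsGenLoop G L A α ∧ A ⊆ relRng G L A α

/-- The nonempty initial segments (initial paths) of a word `α`. -/
def initialSegs (α : List 𝒜) : Set (List 𝒜) := {w | w ≠ [] ∧ w <+: α}

/-- A loop `α` at `A` has an exit if (i) the initial segments of `α` form a
proper subset of `L(A E^{≤|α|})`, or (ii) `r(A, α_{[1,i]})` contains a sink for
some `1 ≤ i ≤ |α|`, or (iii) `A` is a proper subset of `r(A, α)`. -/
def HasExitLoop (G : DirGraph V E) (L : E → 𝒜) (A : Set V) (α : List 𝒜) : Prop :=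
  initialSegs α ⊂ labelsFromLe G L A α.length ∨
  (∃ k : ℕ, 1 ≤ k ∧ k ≤ α.length ∧ (relRng G L A (α.take k) ∩ G.sinks).Nonempty) ∨
  A ⊂ relRng G L A α

/-- `A_0 E^{≤K} A_1 ⋯ E^{≤K} A_m ≠ ∅`: existence of `m` consecutively
composable paths, each of length between `1` and `K`, the `j`-th going from
`As j` to `As (j+1)`. -/
def ChainExists (G : DirGraph V E) (As : ℕ → Set V) (K m : ℕ) : Prop :=
  ∃ xs : Fin m → GPath G,
    (∀ j : Fin m, (xs j).length ≤ K ∧ (xs j).source ∈ As j.val ∧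
      (xs j).range ∈ As (j.val + 1)) ∧
    ∀ (j : ℕ) (h : j + 1 < m),
      (xs ⟨j, Nat.lt_of_succ_lt h⟩).range = (xs ⟨j + 1, h⟩).source

/-- Same as `ChainExists` but with all paths of length exactly `K`
(i.e. `A_0 E^K A_1 ⋯ E^K A_m ≠ ∅`). -/
def ChainExistsExact (G : DirGraph V E) (As : ℕ → Set V) (K m : ℕ) : Prop :=
  ∃ xs : Fin m → GPath G,
    (∀ j : Fin m, (xs j).length = K ∧ (xs j).source ∈ As j.val ∧
      (xs j).range ∈ As (j.val + 1)) ∧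
    ∀ (j : ℕ) (h : j + 1 < m),
      (xs ⟨j, Nat.lt_of_succ_lt h⟩).range = (xs ⟨j + 1, h⟩).source

/-- Condition (a): for every finite family `A_1, …, A_N` in `𝔅̄` and every
`K ≥ 1` there is `m₀ ≥ 1` such that
`A_{i_1} E^{≤K} A_{i_2} ⋯ E^{≤K} A_{i_n} = ∅` (`n` sets, `n - 1` path factors)
for all `n > m₀` and all choices of indices. -/
def CondA (G : DirGraph V E) (L : E → 𝒜) : Prop :=
  ∀ (N : ℕ) (As : Fin N → Set V), (∀ i, Bbar G L (As i)) → ∀ K : ℕ, 1 ≤ K →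
    ∃ m0 : ℕ, 1 ≤ m0 ∧ ∀ n : ℕ, m0 < n → ∀ ι : ℕ → Fin N,
      ¬ ChainExists G (fun j => As (ι j)) K (n - 1)

/-- A word is agreeable (for level `l`) if it is of the form `β^k β'` with
`β, β' ∈ L(E^{≤l})` and `β'` a nonempty initial segment of `β`. -/
def AgreeableW (G : DirGraph V E) (L : E → 𝒜) (l : ℕ) (α : List 𝒜) : Prop :=
  ∃ (k : ℕ) (β β' : List 𝒜), IsLabelWord G L β ∧ IsLabelWord G L β' ∧
    β.length ≤ l ∧ β' ≠ [] ∧ β' <+: β ∧ α = wordPow β k ++ β'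

/-- A representation of the labeled space `(E, L, 𝔅̄)` in a (C*-)algebra `B`:
projections `p A`, `A ∈ 𝔅̄`, and partial isometries `s a`, `a ∈ 𝒜`, satisfying
the defining relations of a labeled graph C*-algebra. -/
structure LRep (G : DirGraph V E) (L : E → 𝒜) (B : Type*)
    [NonUnitalRing B] [StarRing B] where
  p : Set V → B
  s : 𝒜 → B
  p_empty : p ∅ = 0
  p_sa : ∀ A : Set V, Bbar G L A → star (p A) = p A
  p_mul : ∀ A A' : Set V, Bbar G L A → Bbar G L A' → p A * p A' = p (A ∩ A')
  p_union : ∀ A A' : Set V, Bbar G L A → Bbar G L A' →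
    p (A ∪ A') = p A + p A' - p (A ∩ A')
  s_pi : ∀ a : 𝒜, s a * star (s a) * s a = s a
  p_s : ∀ (A : Set V) (a : 𝒜), Bbar G L A → p A * s a = s a * p (relRng G L A [a])
  s_s : ∀ a : 𝒜, star (s a) * s a = p (rngW G L [a])
  s_orth : ∀ a b : 𝒜, a ≠ b → star (s a) * s b = 0
  ck : ∀ A : Set V, Bbar G L A →
    p A = (∑ᶠ a ∈ {a : 𝒜 | ∃ e, G.src e ∈ A ∧ L e = a},
      s a * p (relRng G L A [a]) * star (s a)) + p (A ∩ G.sinks)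

/-- `s_α` for a word `α`: the product of the partial isometries of its letters
(junk value `0` on the empty word, which is never used). -/
def sWord {B : Type*} [NonUnitalRing B] (s : 𝒜 → B) : List 𝒜 → B
  | [] => 0
  | [a] => s a
  | a :: b :: w => s a * sWord s (b :: w)

/-- The range of a word in `L^#(E)` (`none` is the empty word, with range all
of `E^0`). -/
def owordRng (G : DirGraph V E) (L : E → 𝒜) : Option (List 𝒜) → Set V
  | none => Set.univ
  | some w => rngW G L w

/-- The relative range of a word in `L^#(E)` with respect to `A` (`none` is
the empty word, with `r(A, ε) = A`). -/
def relRngE (G : DirGraph V E) (L : E → 𝒜) (A : Set V) : Option (List 𝒜) → Set V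
  | none => A
  | some w => relRng G L A w

/-- The element `s_α p_A s_β*` of a representation, where `α`, `β` are words in
`L^#(E)` (`none` being the empty word `ε` with `s_ε` the identity). -/
def LRep.elt {B : Type*} [NonUnitalRing B] [StarRing B] {G : DirGraph V E} {L : E → 𝒜}
    (rep : LRep G L B) : Option (List 𝒜) → Set V → Option (List 𝒜) → B
  | none, A, none => rep.p A
  | some α, A, none => sWord rep.s α * rep.p A
  | none, A, some β => rep.p A * star (sWord rep.s β)
  | some α, A, some β => sWord rep.s α * rep.p A * star (sWord rep.s β)

/-- A projection `q` is infinite if there is a partial isometry `u` with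
`u* u = q`, `u u* ≤ q` and `u u* ≠ q`. -/
def IsInfiniteProjection (B : Type*) [NonUnitalRing B] [StarRing B] [PartialOrder B]
    (q : B) : Prop :=
  star q = q ∧ q * q = q ∧ ∃ u : B, star u * u = q ∧ u * star u ≤ q ∧ u * star u ≠ q

/-- A C*-algebra is AF if every finite subset can be approximated within any
`ε > 0` from a finite-dimensional *-subalgebra. -/
def IsAFAlgebra (B : Type*) [NonUnitalNormedRing B] [StarRing B] [NormedSpace ℂ B] : Prop :=
  ∀ (F : Finset B) (ε : ℝ), 0 < ε →
    ∃ D : NonUnitalStarSubalgebra ℂ B, FiniteDimensional ℂ D ∧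
      ∀ x ∈ F, ∃ y ∈ (D : Set B), ‖x - y‖ < ε

/-- A gauge action for a representation: a strongly continuous action of the
circle group by *-automorphisms fixing the projections and scaling the
generating partial isometries. -/
structure GaugeAction {B : Type*} [NonUnitalCStarAlgebra B]
    (G : DirGraph V E) (L : E → 𝒜) (rep : LRep G L B) where
  γ : Circle → B ≃⋆ₐ[ℂ] B
  γ_mul : ∀ z w : Circle, γ (z * w) = (γ w).trans (γ z)
  γ_continuous : ∀ x : B, Continuous fun z => γ z x
  γ_s : ∀ (z : Circle) (a : 𝒜), γ z (rep.s a) = (z : ℂ) • rep.s a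
  γ_p : ∀ (z : Circle) (A : Set V), Bbar G L A → γ z (rep.p A) = rep.p A

/-- The representation generates `B` as a C*-algebra. -/
def GeneratesAlg {B : Type*} [NonUnitalCStarAlgebra B]
    (G : DirGraph V E) (L : E → 𝒜) (rep : LRep G L B) : Prop :=
  closure (NonUnitalStarAlgebra.adjoin ℂ
    ({x : B | ∃ a : 𝒜, x = rep.s a} ∪ {x : B | ∃ A : Set V, Bbar G L A ∧ x = rep.p A}) : Set B)
    = Set.univ

/-- A closed two-sided ideal of a C*-algebra (as a set). -/
def IsClosedTwoSidedIdealSet (B : Type*) [NonUnitalNormedRing B] [NormedSpace ℂ B]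
    (I : Set B) : Prop :=
  IsClosed I ∧ (0 : B) ∈ I ∧ (∀ x ∈ I, ∀ y ∈ I, x + y ∈ I) ∧
    (∀ (c : ℂ), ∀ x ∈ I, c • x ∈ I) ∧ ∀ x ∈ I, ∀ y : B, x * y ∈ I ∧ y * x ∈ I

/-- The closed two-sided ideal generated by an element. -/
def closedIdealGen (B : Type*) [NonUnitalNormedRing B] [NormedSpace ℂ B] (q : B) : Set B :=
  ⋂₀ {I : Set B | IsClosedTwoSidedIdealSet B I ∧ q ∈ I}


/-! ### Auxiliary infrastructure for Proposition 3.6 -/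

section Prop36Aux

variable {V E 𝒜 : Type*} {G : DirGraph V E} {L : E → 𝒜}

namespace GPath

lemma one_le_length (p : GPath G) : 1 ≤ p.length :=
  List.length_pos_iff.mpr p.ne

lemma label_ne_nil (p : GPath G) (L : E → 𝒜) : p.label L ≠ [] := by
  simp [label, p.ne]

lemma label_length (p : GPath G) (L : E → 𝒜) : (p.label L).length = p.length := by
  simp [label, length]

/-- The initial segment of a path. -/
def gtake (p : GPath G) (n : ℕ) (hn : n ≠ 0) : GPath G where
  edges := p.edges.take n
  ne := by
    rw [ne_eq, List.take_eq_nil_iff]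
    push_neg
    exact ⟨hn, p.ne⟩
  chain := p.chain.take n

lemma gtake_label (p : GPath G) (n : ℕ) (hn : n ≠ 0) :
    (p.gtake n hn).label L = (p.label L).take n := by
  simp [gtake, label, List.map_take]

lemma gtake_length (p : GPath G) (n : ℕ) (hn : n ≠ 0) (h : n ≤ p.length) :
    (p.gtake n hn).length = n := by
  have : p.edges.length = p.length := rfl
  simp [gtake, length]
  omega

lemma gtake_source (p : GPath G) (n : ℕ) (hn : n ≠ 0) :
    (p.gtake n hn).source = p.source := by
  simp only [GPath.source, GPath.gtake]
  rw [List.head_take]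

lemma gtake_range (p : GPath G) (n : ℕ) (hn : n ≠ 0) (h : n ≤ p.length) :
    (p.gtake n hn).range = G.rng (p.edges[n-1]'(by
      have : p.edges.length = p.length := rfl
      omega)) := by
  simp only [GPath.range, GPath.gtake]
  congr 1
  rw [List.getLast_take]
  have hlt : n - 1 < p.edges.length := by
    have : p.edges.length = p.length := rfl
    omega
  rw [List.getElem?_eq_getElem hlt]
  rfl

/-- The terminal segment of a path. -/
def gdrop (p : GPath G) (n : ℕ) (hn : n < p.length) : GPath G where
  edges := p.edges.drop n
  ne := by
    rw [ne_eq, List.drop_eq_nil_iff]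
    have : p.edges.length = p.length := rfl
    omega
  chain := p.chain.drop n

lemma gdrop_label (p : GPath G) (n : ℕ) (hn : n < p.length) :
    (p.gdrop n hn).label L = (p.label L).drop n := by
  simp [gdrop, label, List.map_drop]

lemma gdrop_length (p : GPath G) (n : ℕ) (hn : n < p.length) :
    (p.gdrop n hn).length = p.length - n := by
  simp [gdrop, length]

lemma gdrop_range (p : GPath G) (n : ℕ) (hn : n < p.length) :
    (p.gdrop n hn).range = p.range := by
  show G.rng _ = G.rng _
  congr 1
  exact List.getLast_drop _

lemma gdrop_source (p : GPath G) (n : ℕ) (hn : n < p.length) (hn0 : n ≠ 0) :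
    (p.gdrop n hn).source = (p.gtake n hn0).range := by
  have hlen : p.edges.length = p.length := rfl
  have h1 : G.src ((p.edges.drop n).head (p.gdrop n hn).ne) =
      G.rng (p.edges[n-1]'(by omega)) := by
    refine (congrArg G.src (List.head_drop _)).trans ?_
    have hc := List.isChain_iff_getElem.mp p.chain (n-1) (by omega)
    have h2 : n - 1 + 1 = n := by omega
    simp only [List.get_eq_getElem, h2] at hc
    exact hc.symm
  rw [gtake_range p n hn0 (le_of_lt hn)]
  exact h1

/-- Concatenation of composable paths. -/
def gappend (p q : GPath G) (h : p.range = q.source) : GPath G where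
  edges := p.edges ++ q.edges
  ne := by simp [p.ne]
  chain := by
    refine List.isChain_append.mpr ⟨p.chain, q.chain, ?_⟩
    intro x hx y hy
    rw [List.getLast?_eq_getLast p.ne, Option.mem_def, Option.some_inj] at hx
    rw [List.head?_eq_head q.ne, Option.mem_def, Option.some_inj] at hy
    rw [← hx, ← hy]
    exact h

lemma gappend_source (p q : GPath G) (h : p.range = q.source) :
    (p.gappend q h).source = p.source := by
  simp only [GPath.source, GPath.gappend]
  congr 1
  rw [List.head_append]
  simp [p.ne]

lemma gappend_range (p q : GPath G) (h : p.range = q.source) :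
    (p.gappend q h).range = q.range := by
  simp only [GPath.range, GPath.gappend]
  congr 1
  rw [List.getLast_append]
  simp [q.ne]

lemma gappend_label (p q : GPath G) (h : p.range = q.source) :
    (p.gappend q h).label L = p.label L ++ q.label L := by
  simp [gappend, label]

end GPath

/-- Relative range with the convention `r(A, ε) = A`. -/
def rr (G : DirGraph V E) (L : E → 𝒜) (A : Set V) : List 𝒜 → Set V
  | [] => A
  | a :: w => relRng G L A (a :: w)

@[simp] lemma rr_nil (A : Set V) : rr G L A [] = A := rfl

lemma rr_ne {A : Set V} {w : List 𝒜} (hw : w ≠ []) : rr G L A w = relRng G L A w := by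
  cases w with
  | nil => exact absurd rfl hw
  | cons a w => rfl

lemma relRng_empty (w : List 𝒜) : relRng G L (∅ : Set V) w = ∅ := by
  ext v
  simp only [relRng, Set.mem_setOf_eq, Set.mem_empty_iff_false, iff_false]
  rintro ⟨p, _, hsrc, _⟩
  exact hsrc

lemma rr_empty (w : List 𝒜) : rr G L (∅ : Set V) w = ∅ := by
  cases w with
  | nil => rfl
  | cons a w => exact relRng_empty _

lemma relRng_subset_rngW (A : Set V) (w : List 𝒜) :
    relRng G L A w ⊆ rngW G L w := by
  rintro v ⟨p, h1, _, h3⟩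
  exact ⟨p, h1, h3⟩

lemma relRng_cons (A : Set V) (a : 𝒜) {w : List 𝒜} (hw : w ≠ []) :
    relRng G L A (a :: w) = relRng G L (relRng G L A [a]) w := by
  ext v
  constructor
  · rintro ⟨p, hlab, hsrc, hrng⟩
    have hlen : p.length = w.length + 1 := by
      rw [← p.label_length L, hlab]; simp
    have hwl : w.length ≠ 0 := by simpa using hw
    have hlt : 1 < p.length := by omega
    refine ⟨p.gdrop 1 hlt, ?_, ?_, ?_⟩
    · rw [GPath.gdrop_label, hlab]; rfl
    · rw [GPath.gdrop_source p 1 hlt one_ne_zero]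
      exact ⟨p.gtake 1 one_ne_zero, by rw [GPath.gtake_label, hlab]; rfl,
        by rw [GPath.gtake_source]; exact hsrc, rfl⟩
    · rw [GPath.gdrop_range]; exact hrng
  · rintro ⟨q, hqlab, ⟨p1, hp1lab, hp1src, hp1rng⟩, hqrng⟩
    refine ⟨p1.gappend q hp1rng, ?_, ?_, ?_⟩
    · rw [GPath.gappend_label, hp1lab, hqlab]; rfl
    · rw [GPath.gappend_source]; exact hp1src
    · rw [GPath.gappend_range]; exact hqrng

lemma rngW_eq_relRng_univ (w : List 𝒜) :
    rngW G L w = relRng G L (Set.univ : Set V) w := by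
  ext v
  constructor
  · rintro ⟨p, h1, h2⟩; exact ⟨p, h1, trivial, h2⟩
  · rintro ⟨p, h1, _, h2⟩; exact ⟨p, h1, h2⟩

lemma rngW_cons (a : 𝒜) {w : List 𝒜} (hw : w ≠ []) :
    rngW G L (a :: w) = relRng G L (rngW G L [a]) w := by
  rw [rngW_eq_relRng_univ, relRng_cons _ _ hw, rngW_eq_relRng_univ]

lemma relRng_append (A : Set V) {u v : List 𝒜} (hu : u ≠ []) (hv : v ≠ []) :
    relRng G L A (u ++ v) = relRng G L (relRng G L A u) v := by
  induction u generalizing A with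
  | nil => exact absurd rfl hu
  | cons a u ih =>
    cases u with
    | nil => exact relRng_cons A a hv
    | cons b u' =>
      rw [List.cons_append, relRng_cons A a (by simp), ih _ (by simp),
        ← relRng_cons A a (by simp)]

lemma relRng_snoc (A : Set V) (u : List 𝒜) (a : 𝒜) :
    relRng G L A (u ++ [a]) = relRng G L (rr G L A u) [a] := by
  cases u with
  | nil => rfl
  | cons b u' => rw [relRng_append A (by simp) (by simp), rr_ne (by simp)]

lemma rr_append (A : Set V) {u v : List 𝒜} (hv : v ≠ []) :
    rr G L A (u ++ v) = rr G L (rr G L A u) v := by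
  cases u with
  | nil => rfl
  | cons a u' =>
    rw [rr_ne (by simp), rr_ne hv, rr_ne (by simp : (a :: u') ≠ []),
      relRng_append A (by simp) hv]

lemma isLabelWord_letter (hL : Function.Surjective L) (a : 𝒜) :
    IsLabelWord G L [a] := by
  obtain ⟨e, he⟩ := hL a
  exact ⟨⟨[e], by simp, List.isChain_singleton e⟩, by simp [GPath.label, he]⟩

lemma isLabelWord_ne_nil {w : List 𝒜} (hw : IsLabelWord G L w) : w ≠ [] := by
  obtain ⟨p, hp⟩ := hw
  rw [← hp]
  exact p.label_ne_nil L

lemma isLabelWord_prefix {w u : List 𝒜} (hw : IsLabelWord G L w)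
    (hu : u <+: w) (hne : u ≠ []) : IsLabelWord G L u := by
  obtain ⟨p, hp⟩ := hw
  have hul : u.length ≠ 0 := by simpa using hne
  refine ⟨p.gtake u.length hul, ?_⟩
  rw [GPath.gtake_label, hp, ← List.prefix_iff_eq_take.mp hu]

lemma bbar_rr {A : Set V} (hA : Bbar G L A) {u : List 𝒜}
    (hu : u = [] ∨ IsLabelWord G L u) : Bbar G L (rr G L A u) := by
  rcases hu with h | h
  · rw [h]; exact hA
  · rw [rr_ne (isLabelWord_ne_nil h)]
    exact Bbar.rel A u hA h

/-- The source of the `j`-th edge of a path lies in `r(A, w_{[1,j]})`. -/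
lemma src_getElem_mem_rr (p : GPath G) {A : Set V} (hA : p.source ∈ A)
    (j : ℕ) (hj : j < p.length) :
    G.src (p.edges[j]'hj) ∈ rr G L A ((p.label L).take j) := by
  have hlen : p.edges.length = p.length := rfl
  cases j with
  | zero =>
    simp only [List.take_zero, rr_nil]
    have : p.edges[0]'(by omega) = p.edges.head p.ne := by
      exact (List.getElem_zero _)
    refine (congrArg (· ∈ A) (congrArg G.src this)).mpr ?_
    exact hA
  | succ m =>
    have hll : (p.label L).length = p.length := p.label_length L
    have hne : (p.label L).take (m+1) ≠ [] := by
      rw [ne_eq, List.take_eq_nil_iff]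
      push_neg
      exact ⟨by omega, p.label_ne_nil L⟩
    rw [rr_ne hne]
    have hc := List.isChain_iff_getElem.mp p.chain m (by omega)
    refine ⟨p.gtake (m+1) (by omega), GPath.gtake_label p (m+1) (by omega), ?_, ?_⟩
    · rw [GPath.gtake_source]; exact hA
    · rw [GPath.gtake_range p (m+1) (by omega) (by omega)]
      simp only [Nat.add_sub_cancel]
      exact hc

lemma label_getElem (p : GPath G) (j : ℕ) (hj : j < p.length) :
    (p.label L)[j]'(by rw [p.label_length L]; omega) = L (p.edges[j]'hj) := by
  simp [GPath.label]
  rfl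

/-- First-divergence index of a non-prefix. -/
lemma divergence {c b : List 𝒜} (hne : c ≠ []) (hlen : c.length ≤ b.length)
    (hnp : ¬ c <+: b) :
    ∃ (j : ℕ) (h1 : j < c.length) (h2 : j < b.length),
      c.take j = b.take j ∧ c.get ⟨j, h1⟩ ≠ b.get ⟨j, h2⟩ := by
  induction c generalizing b with
  | nil => exact absurd rfl hne
  | cons a c' ih =>
    cases b with
    | nil => simp at hlen
    | cons x b' =>
      by_cases hax : a = x
      · subst hax
        have hnp' : ¬ c' <+: b' := fun h => hnp (List.cons_prefix_cons.mpr ⟨rfl, h⟩)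
        have hc'ne : c' ≠ [] := by
          rintro rfl
          exact hnp' (List.nil_prefix)
        obtain ⟨j, h1, h2, htake, hget⟩ := ih hc'ne (by simpa using hlen) hnp'
        refine ⟨j + 1, by simpa using h1, by simpa using h2, ?_, ?_⟩
        · simp [List.take_succ_cons, htake]
        · simpa using hget
      · exact ⟨0, by simp, by simp, by simp, by simpa using hax⟩

lemma isLabelWord_tail {a : 𝒜} {w : List 𝒜} (h : IsLabelWord G L (a :: w))
    (hw : w ≠ []) : IsLabelWord G L w := by
  obtain ⟨p, hp⟩ := h
  have hlen : p.length = w.length + 1 := by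
    rw [← p.label_length L, hp]; simp
  have hwl : w.length ≠ 0 := by simpa using hw
  have hlt : 1 < p.length := by omega
  exact ⟨p.gdrop 1 hlt, by rw [GPath.gdrop_label, hp]; simp⟩

lemma emit_of_path (p : GPath G) {A : Set V} (hA : p.source ∈ A) {w : List 𝒜}
    (hlab : p.label L = w) (j : ℕ) (hj : j < w.length) :
    w.get ⟨j, hj⟩ ∈ {x : 𝒜 | ∃ e, G.src e ∈ rr G L A (w.take j) ∧ L e = x} := by
  subst hlab
  have hj' : j < p.length := by rw [← p.label_length L]; exact hj
  refine ⟨p.edges[j]'hj', src_getElem_mem_rr p hA j hj', ?_⟩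
  simpa [List.get_eq_getElem] using (label_getElem (L := L) p j hj').symm

set_option linter.unusedSectionVars false

section Algebra

variable {B : Type*} [NonUnitalCStarAlgebra B] [PartialOrder B] [StarOrderedRing B]
variable (rep : LRep G L B)

lemma p_proj {A : Set V} (hA : Bbar G L A) : rep.p A * rep.p A = rep.p A := by
  rw [rep.p_mul A A hA hA, Set.inter_self]

lemma p_nonneg {A : Set V} (hA : Bbar G L A) : 0 ≤ rep.p A := by
  calc (0 : B) ≤ star (rep.p A) * rep.p A := star_mul_self_nonneg _
  _ = rep.p A := by rw [rep.p_sa A hA, p_proj rep hA]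

lemma p_diff {A C : Set V} (hA : Bbar G L A) (hC : Bbar G L C) (h : A ⊆ C) :
    rep.p (C \ A) = rep.p C - rep.p A := by
  have h1 := rep.p_union A (C \ A) hA (Bbar.diff C A hC hA)
  rw [Set.union_diff_cancel h, Set.inter_diff_self, rep.p_empty, sub_zero] at h1
  rw [h1]; abel

lemma p_le_of_subset {A C : Set V} (hA : Bbar G L A) (hC : Bbar G L C) (h : A ⊆ C) :
    rep.p A ≤ rep.p C := by
  have h2 : 0 ≤ rep.p C - rep.p A := by
    rw [← p_diff rep hA hC h]; exact p_nonneg rep (Bbar.diff C A hC hA)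
  exact sub_nonneg.mp h2

lemma sWord_cons (s : 𝒜 → B) (a : 𝒜) {w : List 𝒜} (hw : w ≠ []) :
    sWord s (a :: w) = s a * sWord s w := by
  cases w with
  | nil => exact absurd rfl hw
  | cons b w' => rfl

lemma sWord_append (s : 𝒜 → B) {u v : List 𝒜} (hu : u ≠ []) (hv : v ≠ []) :
    sWord s (u ++ v) = sWord s u * sWord s v := by
  induction u with
  | nil => exact absurd rfl hu
  | cons a u' ih =>
    cases u' with
    | nil =>
      rw [List.cons_append, List.nil_append, sWord_cons s a hv]
      rfl
    | cons b u'' =>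
      rw [List.cons_append, sWord_cons s a (by simp), ih (by simp),
        sWord_cons s a (by simp : (b :: u'') ≠ []), mul_assoc]

lemma p_s_word (hL : Function.Surjective L) {w : List 𝒜} {A : Set V}
    (hA : Bbar G L A) (hw : w ≠ []) :
    rep.p A * sWord rep.s w = sWord rep.s w * rep.p (relRng G L A w) := by
  revert hA hw
  induction w generalizing A with
  | nil => intro _ hw; exact absurd rfl hw
  | cons a w ih =>
    intro hA _
    cases w with
    | nil => exact rep.p_s A a hA
    | cons b w' =>
      have hw' : (b :: w') ≠ [] := by simp
      have hA' : Bbar G L (relRng G L A [a]) :=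
        Bbar.rel A [a] hA (isLabelWord_letter hL a)
      rw [sWord_cons rep.s a hw', ← mul_assoc, rep.p_s A a hA, mul_assoc,
        ih hA' hw', ← mul_assoc, ← sWord_cons rep.s a hw', ← relRng_cons A a hw']

lemma sWord_star_sWord (hL : Function.Surjective L) {w : List 𝒜}
    (hw : IsLabelWord G L w) :
    star (sWord rep.s w) * sWord rep.s w = rep.p (rngW G L w) := by
  revert hw
  induction w with
  | nil => intro hw; exact absurd rfl (isLabelWord_ne_nil hw)
  | cons a w ih =>
    intro hw
    cases w with
    | nil => exact rep.s_s a
    | cons b w' =>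
      have hW : (b :: w') ≠ [] := by simp
      have hWl : IsLabelWord G L (b :: w') := isLabelWord_tail hw hW
      have hBa : Bbar G L (rngW G L [a]) :=
        Bbar.base [a] (isLabelWord_letter hL a)
      calc star (sWord rep.s (a :: b :: w')) * sWord rep.s (a :: b :: w')
          = star (sWord rep.s (b :: w')) * (star (rep.s a) * rep.s a) *
              sWord rep.s (b :: w') := by
            rw [sWord_cons rep.s a hW, star_mul]
            simp only [mul_assoc]
        _ = star (sWord rep.s (b :: w')) *
              (rep.p (rngW G L [a]) * sWord rep.s (b :: w')) := by
            rw [rep.s_s a]; simp only [mul_assoc]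
        _ = star (sWord rep.s (b :: w')) * (sWord rep.s (b :: w') *
              rep.p (relRng G L (rngW G L [a]) (b :: w'))) := by
            rw [p_s_word rep hL hBa hW]
        _ = rep.p (rngW G L (b :: w')) *
              rep.p (relRng G L (rngW G L [a]) (b :: w')) := by
            rw [← mul_assoc, ih hWl]
        _ = rep.p (rngW G L (a :: b :: w')) := by
            rw [rep.p_mul _ _ (Bbar.base _ hWl) (Bbar.rel _ _ hBa hWl),
              Set.inter_eq_self_of_subset_right (relRng_subset_rngW _ _),
              ← rngW_cons a hW]

lemma sWord_mul_p_rngW (hL : Function.Surjective L) {w : List 𝒜} (hw : w ≠ []) :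
    sWord rep.s w * rep.p (rngW G L w) = sWord rep.s w := by
  cases w with
  | nil => exact absurd rfl hw
  | cons a w =>
    cases w with
    | nil =>
      show rep.s a * rep.p (rngW G L [a]) = rep.s a
      rw [← rep.s_s a, ← mul_assoc, rep.s_pi]
    | cons b w' =>
      have hW : (b :: w') ≠ [] := by simp
      have hBa : Bbar G L (rngW G L [a]) :=
        Bbar.base [a] (isLabelWord_letter hL a)
      have key : sWord rep.s (a :: b :: w')
          = sWord rep.s (a :: b :: w') * rep.p (rngW G L (a :: b :: w')) := by
        calc sWord rep.s (a :: b :: w')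
            = rep.s a * sWord rep.s (b :: w') := sWord_cons rep.s a hW
          _ = rep.s a * rep.p (rngW G L [a]) * sWord rep.s (b :: w') := by
              rw [← rep.s_s a, ← mul_assoc, rep.s_pi]
          _ = rep.s a * (sWord rep.s (b :: w') *
                rep.p (relRng G L (rngW G L [a]) (b :: w'))) := by
              rw [mul_assoc, p_s_word rep hL hBa hW]
          _ = sWord rep.s (a :: b :: w') * rep.p (rngW G L (a :: b :: w')) := by
              rw [sWord_cons rep.s a hW, rngW_cons a hW, mul_assoc]
      conv_rhs => rw [key]

end Algebra

/-- Conjugation `x ↦ s_w x s_w^*`, with the convention `conj0 ε x = x`. -/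
def conj0 {B : Type*} [NonUnitalRing B] [StarRing B] (s : 𝒜 → B) :
    List 𝒜 → B → B
  | [], x => x
  | a :: w, x => sWord s (a :: w) * x * star (sWord s (a :: w))

section Algebra2

variable {B : Type*} [NonUnitalCStarAlgebra B] [PartialOrder B] [StarOrderedRing B]
variable (rep : LRep G L B)

lemma conj0_ne (s : 𝒜 → B) {w : List 𝒜} (hw : w ≠ []) (x : B) :
    conj0 s w x = sWord s w * x * star (sWord s w) := by
  cases w with
  | nil => exact absurd rfl hw
  | cons a w => rfl

lemma conj0_cons (s : 𝒜 → B) (a : 𝒜) (w : List 𝒜) (x : B) :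
    conj0 s (a :: w) x = s a * conj0 s w x * star (s a) := by
  cases w with
  | nil => rfl
  | cons b w' =>
    show (s a * sWord s (b :: w')) * x * star (s a * sWord s (b :: w'))
      = s a * (sWord s (b :: w') * x * star (sWord s (b :: w'))) * star (s a)
    rw [star_mul]
    simp only [mul_assoc]

lemma conj0_zero (s : 𝒜 → B) (w : List 𝒜) : conj0 s w 0 = 0 := by
  cases w with
  | nil => rfl
  | cons a w => show _ * (0 : B) * _ = 0; rw [mul_zero, zero_mul]

lemma conj0_add (s : 𝒜 → B) (w : List 𝒜) (x y : B) :
    conj0 s w (x + y) = conj0 s w x + conj0 s w y := by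
  cases w with
  | nil => rfl
  | cons a w =>
    show _ * (x + y) * _ = _
    rw [mul_add, add_mul]
    rfl

lemma conj0_nonneg (s : 𝒜 → B) (w : List 𝒜) {x : B} (hx : 0 ≤ x) :
    0 ≤ conj0 s w x := by
  cases w with
  | nil => exact hx
  | cons a w =>
    rw [conj0_ne s (by simp)]
    simpa [star_star] using star_left_conjugate_nonneg hx (star (sWord s (a :: w)))

lemma conj0_mono (s : 𝒜 → B) (w : List 𝒜) {x y : B} (h : x ≤ y) :
    conj0 s w x ≤ conj0 s w y := by
  cases w with
  | nil => exact h
  | cons a w =>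
    rw [conj0_ne s (by simp), conj0_ne s (by simp)]
    simpa [star_star] using star_left_conjugate_le_conjugate h (star (sWord s (a :: w)))

lemma conj0_append (s : 𝒜 → B) (u v : List 𝒜) (x : B) :
    conj0 s (u ++ v) x = conj0 s u (conj0 s v x) := by
  induction u with
  | nil => rfl
  | cons a u' ih => rw [List.cons_append, conj0_cons, ih, conj0_cons]

lemma conj0_snoc (s : 𝒜 → B) (u : List 𝒜) (a : 𝒜) (x : B) :
    conj0 s (u ++ [a]) x = conj0 s u (s a * x * star (s a)) := by
  rw [conj0_append]
  rfl

lemma emit_finite (sa : StandingAssumptions G L) {A : Set V} (hA : Bbar G L A) :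
    ({a : 𝒜 | ∃ e, G.src e ∈ A ∧ L e = a}).Finite := by
  have h := sa.setFinite A hA 1 le_rfl
  have hsub : {a : 𝒜 | ∃ e, G.src e ∈ A ∧ L e = a}
      ⊆ (fun a : 𝒜 => [a]) ⁻¹' (labelsFromLen G L A 1) := by
    rintro a ⟨e, hsrc, hlab⟩
    exact ⟨⟨[e], by simp, List.isChain_singleton e⟩, hsrc,
      by simp [GPath.length], by simp [GPath.label, hlab]⟩
  have hinj : Set.InjOn (fun a : 𝒜 => [a])
      ((fun a : 𝒜 => [a]) ⁻¹' (labelsFromLen G L A 1)) := by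
    intro x _ y _ hxy
    simpa using hxy
  exact (h.preimage hinj).subset hsub

lemma relRng_letter_eq_empty {A : Set V} {a : 𝒜}
    (ha : a ∉ {x : 𝒜 | ∃ e, G.src e ∈ A ∧ L e = x}) :
    relRng G L A [a] = ∅ := by
  ext v
  simp only [Set.mem_empty_iff_false, iff_false]
  rintro ⟨p, hlab, hsrc, _⟩
  refine ha ⟨p.edges.head p.ne, hsrc, ?_⟩
  have h1 : (p.label L).head? = some a := by rw [hlab]; rfl
  rw [show p.label L = p.edges.map L from rfl, List.head?_map,
    List.head?_eq_head p.ne] at h1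
  simpa using h1

lemma term_nonneg {C : Set V} (hC : Bbar G L C) (a : 𝒜) :
    0 ≤ rep.s a * rep.p C * star (rep.s a) := by
  have h : rep.s a * rep.p C * star (rep.s a)
      = star (star (rep.s a)) * rep.p C * star (rep.s a) := by rw [star_star]
  rw [h]
  exact star_left_conjugate_nonneg (p_nonneg rep hC) _

lemma ck_ge_pair (hL : Function.Surjective L) (sa : StandingAssumptions G L)
    {A : Set V} (hA : Bbar G L A) {a b : 𝒜}
    (ha : a ∈ {x : 𝒜 | ∃ e, G.src e ∈ A ∧ L e = x})
    (hb : b ∈ {x : 𝒜 | ∃ e, G.src e ∈ A ∧ L e = x}) (hab : a ≠ b) :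
    rep.s a * rep.p (relRng G L A [a]) * star (rep.s a)
      + rep.s b * rep.p (relRng G L A [b]) * star (rep.s b) ≤ rep.p A := by
  classical
  have hfin := emit_finite (G := G) (L := L) sa hA
  have hck := rep.ck A hA
  rw [finsum_mem_eq_finite_toFinset_sum _ hfin] at hck
  have hsub : ({a, b} : Finset 𝒜) ⊆ hfin.toFinset := by
    intro x hx
    rw [Set.Finite.mem_toFinset]
    rcases Finset.mem_insert.mp hx with h | h
    · rw [h]; exact ha
    · rw [Finset.mem_singleton.mp h]; exact hb
  have hterm : ∀ i ∈ hfin.toFinset, i ∉ ({a, b} : Finset 𝒜) →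
      0 ≤ rep.s i * rep.p (relRng G L A [i]) * star (rep.s i) := fun i _ _ =>
    term_nonneg rep (Bbar.rel A [i] hA (isLabelWord_letter hL i)) i
  have h2 := Finset.sum_le_sum_of_subset_of_nonneg hsub hterm
  rw [Finset.sum_pair hab] at h2
  calc rep.s a * rep.p (relRng G L A [a]) * star (rep.s a)
        + rep.s b * rep.p (relRng G L A [b]) * star (rep.s b)
      ≤ ∑ i ∈ hfin.toFinset,
          rep.s i * rep.p (relRng G L A [i]) * star (rep.s i) := h2
    _ ≤ (∑ i ∈ hfin.toFinset,
          rep.s i * rep.p (relRng G L A [i]) * star (rep.s i))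
          + rep.p (A ∩ G.sinks) :=
        le_add_of_nonneg_right (p_nonneg rep (Bbar.sk A hA))
    _ = rep.p A := hck.symm

lemma ck_ge_single (hL : Function.Surjective L) (sa : StandingAssumptions G L)
    {A : Set V} (hA : Bbar G L A) {a : 𝒜}
    (ha : a ∈ {x : 𝒜 | ∃ e, G.src e ∈ A ∧ L e = x}) :
    rep.s a * rep.p (relRng G L A [a]) * star (rep.s a) ≤ rep.p A := by
  classical
  have hfin := emit_finite (G := G) (L := L) sa hA
  have hck := rep.ck A hA
  rw [finsum_mem_eq_finite_toFinset_sum _ hfin] at hck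
  have hsub : ({a} : Finset 𝒜) ⊆ hfin.toFinset := by
    intro x hx
    rw [Set.Finite.mem_toFinset, Finset.mem_singleton.mp hx]
    exact ha
  have hterm : ∀ i ∈ hfin.toFinset, i ∉ ({a} : Finset 𝒜) →
      0 ≤ rep.s i * rep.p (relRng G L A [i]) * star (rep.s i) := fun i _ _ =>
    term_nonneg rep (Bbar.rel A [i] hA (isLabelWord_letter hL i)) i
  have h2 := Finset.sum_le_sum_of_subset_of_nonneg hsub hterm
  rw [Finset.sum_singleton] at h2
  calc rep.s a * rep.p (relRng G L A [a]) * star (rep.s a)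
      ≤ ∑ i ∈ hfin.toFinset,
          rep.s i * rep.p (relRng G L A [i]) * star (rep.s i) := h2
    _ ≤ (∑ i ∈ hfin.toFinset,
          rep.s i * rep.p (relRng G L A [i]) * star (rep.s i))
          + rep.p (A ∩ G.sinks) :=
        le_add_of_nonneg_right (p_nonneg rep (Bbar.sk A hA))
    _ = rep.p A := hck.symm

lemma conj0_rr_le (hL : Function.Surjective L) (sa : StandingAssumptions G L) :
    ∀ (w : List 𝒜) {A : Set V}, Bbar G L A →
      conj0 rep.s w (rep.p (rr G L A w)) ≤ rep.p A := by
  intro w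
  induction w with
  | nil => intro A _; exact le_of_eq rfl
  | cons a w ih =>
    intro A hA
    rw [conj0_cons]
    have hA' : Bbar G L (relRng G L A [a]) :=
      Bbar.rel A [a] hA (isLabelWord_letter hL a)
    have hrr : rr G L A (a :: w) = rr G L (relRng G L A [a]) w := by
      cases w with
      | nil => rfl
      | cons b w' =>
        rw [rr_ne (by simp : (a :: b :: w') ≠ []), rr_ne (by simp : (b :: w') ≠ []),
          relRng_cons A a (by simp)]
    rw [hrr]
    by_cases ha : a ∈ {x : 𝒜 | ∃ e, G.src e ∈ A ∧ L e = x}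
    · calc rep.s a * conj0 rep.s w (rep.p (rr G L (relRng G L A [a]) w)) * star (rep.s a)
          ≤ rep.s a * rep.p (relRng G L A [a]) * star (rep.s a) := by
            simpa [star_star] using star_left_conjugate_le_conjugate (ih hA') (star (rep.s a))
        _ ≤ rep.p A := ck_ge_single rep hL sa hA ha
    · rw [relRng_letter_eq_empty ha, rr_empty, rep.p_empty, conj0_zero,
        mul_zero, zero_mul]
      exact p_nonneg rep hA

lemma conj0_le_of_le (hL : Function.Surjective L) (sa : StandingAssumptions G L)
    {A : Set V} (hA : Bbar G L A) (u : List 𝒜) {x : B}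
    (hx : x ≤ rep.p (rr G L A u)) : conj0 rep.s u x ≤ rep.p A :=
  (conj0_mono rep.s u hx).trans (conj0_rr_le rep hL sa u hA)

end Algebra2

end Prop36Aux

/-- Proposition 3.6. Let `{s_a, p_A}` be a representation of
`(E, L, 𝔅̄)` in a C*-algebra with `p_C ≠ 0` for all nonempty `C ∈ 𝔅̄` and no
infinite projection `p_B`, `B ∈ 𝔅̄`. If `A ∈ 𝔅̄` admits a loop, then there is
a loop `α` at `A` with `A = r(A, α)` and
`L(A E^{≥1}) = {α^k α' : k ≥ 0, α'` an initial segment of `α}`. -/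
theorem loop_no_infinite_projections_structure {V E 𝒜 B : Type*}
    [Countable V] [Countable E] [Countable 𝒜]
    [NonUnitalCStarAlgebra B] [PartialOrder B] [StarOrderedRing B]
    (G : DirGraph V E) (L : E → 𝒜) (hL : Function.Surjective L)
    (sa : StandingAssumptions G L)
    (rep : LRep G L B)
    (hp : ∀ C : Set V, Bbar G L C → C.Nonempty → rep.p C ≠ 0)
    (hfin : ∀ B' : Set V, Bbar G L B' → ¬ IsInfiniteProjection B (rep.p B'))
    (A : Set V) (hA : Bbar G L A) (hadmits : ∃ β : List 𝒜, IsLoop G L A β) :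
    ∃ α : List 𝒜, IsLoop G L A α ∧ A = relRng G L A α ∧
      labelsFromGe G L A 1 =
        {w | ∃ (k : ℕ) (α' : List 𝒜), α' ≠ [] ∧ α' <+: α ∧ w = wordPow α k ++ α'} := by
  classical
  obtain ⟨β, hβloop⟩ := hadmits
  obtain ⟨hβgen, hsub⟩ := hβloop
  obtain ⟨ν, hνlab, hνsrc, hνrng⟩ := hβgen
  have hβlw : IsLabelWord G L β := ⟨ν, hνlab⟩
  have hβne : β ≠ [] := isLabelWord_ne_nil hβlw
  have hνlen : ν.length = β.length := by rw [← ν.label_length L, hνlab]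
  have hβpos : 1 ≤ β.length := by
    have := ν.one_le_length; omega
  have hRB : Bbar G L (relRng G L A β) := Bbar.rel A β hA hβlw
  -- partial isometry computations
  have hiso : ∀ (w : List 𝒜), IsLabelWord G L w → ∀ (C : Set V), Bbar G L C →
      C ⊆ rngW G L w →
      star (sWord rep.s w * rep.p C) * (sWord rep.s w * rep.p C) = rep.p C := by
    intro w hwlw C hC hCsub
    rw [star_mul, rep.p_sa C hC, mul_assoc (rep.p C) (star (sWord rep.s w)) _,
      ← mul_assoc (star (sWord rep.s w)) (sWord rep.s w) (rep.p C),
      sWord_star_sWord rep hL hwlw,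
      rep.p_mul _ _ (Bbar.base w hwlw) hC,
      Set.inter_eq_self_of_subset_right hCsub, p_proj rep hC]
  have hconj : ∀ (w : List 𝒜), w ≠ [] → ∀ (C : Set V), Bbar G L C →
      (sWord rep.s w * rep.p C) * star (sWord rep.s w * rep.p C)
        = conj0 rep.s w (rep.p C) := by
    intro w hwne C hC
    rw [star_mul, rep.p_sa C hC, conj0_ne rep.s hwne, ← mul_assoc,
      mul_assoc (sWord rep.s w) (rep.p C) (rep.p C), p_proj rep hC]
  -- Step 1: A = r(A, β)
  have hstep1 : A = relRng G L A β := by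
    by_contra hne'
    apply hfin (relRng G L A β) hRB
    refine ⟨rep.p_sa _ hRB, p_proj rep hRB, sWord rep.s β * rep.p (relRng G L A β),
      hiso β hβlw _ hRB (relRng_subset_rngW A β), ?_, ?_⟩
    · rw [hconj β hβne _ hRB]
      calc conj0 rep.s β (rep.p (relRng G L A β)) ≤ rep.p A := by
            have := conj0_rr_le rep hL sa β hA
            rwa [rr_ne hβne] at this
        _ ≤ rep.p (relRng G L A β) := p_le_of_subset rep hA hRB hsub
    · intro heq
      rw [hconj β hβne _ hRB] at heq
      have hle : rep.p (relRng G L A β) ≤ rep.p A := by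
        rw [← heq]
        have := conj0_rr_le rep hL sa β hA
        rwa [rr_ne hβne] at this
      have hz : rep.p (relRng G L A β \ A) = 0 := by
        rw [p_diff rep hA hRB hsub]
        exact le_antisymm (sub_nonpos.mpr hle)
          (sub_nonneg.mpr (p_le_of_subset rep hA hRB hsub))
      have hss : A ⊂ relRng G L A β := hsub.ssubset_of_ne hne'
      exact hp _ (Bbar.diff _ A hRB hA) (Set.nonempty_of_ssubset hss) hz
  have hAsub_rngW : A ⊆ rngW G L β := by
    rw [hstep1]; exact relRng_subset_rngW A β
  -- Step 2: every label word from A of length ≤ |β| is a prefix of β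
  have hpref : ∀ c : List 𝒜, c ≠ [] → c.length ≤ β.length →
      (∃ μ : GPath G, μ.label L = c ∧ μ.source ∈ A) → c <+: β := by
    intro c hcne hclen hcpath
    obtain ⟨μ, hμlab, hμsrc⟩ := hcpath
    by_contra hnp
    obtain ⟨j, hj1, hj2, htake, hget⟩ := divergence hcne hclen hnp
    have hμlen : μ.length = c.length := by rw [← μ.label_length L, hμlab]
    have hu0lw : β.take j = [] ∨ IsLabelWord G L (β.take j) := by
      rcases Nat.eq_zero_or_pos j with h | h
      · left; simp [h]
      · right
        exact isLabelWord_prefix hβlw (List.take_prefix j β)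
          (by rw [ne_eq, List.take_eq_nil_iff]; push_neg; exact ⟨by omega, hβne⟩)
    have hBu0 : Bbar G L (rr G L A (β.take j)) := bbar_rr hA hu0lw
    have hbj_emit := emit_of_path (L := L) ν hνsrc hνlab j hj2
    have hcj_emit' := emit_of_path (L := L) μ hμsrc hμlab j hj1
    rw [htake] at hcj_emit'
    -- snoc identities
    have hbeq : β.take j ++ [β.get ⟨j, hj2⟩] = β.take (j+1) := by
      have := List.take_concat_get (l := β) hj2
      rw [List.concat_eq_append] at this
      simpa [List.get_eq_getElem] using this
    have hdeq : β.take j ++ [c.get ⟨j, hj1⟩] = c.take (j+1) := by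
      have := List.take_concat_get (l := c) hj1
      rw [List.concat_eq_append] at this
      rw [← htake]
      simpa [List.get_eq_getElem] using this
    have hdne : c.take (j+1) ≠ [] := by
      rw [ne_eq, List.take_eq_nil_iff]; push_neg; exact ⟨by omega, hcne⟩
    have hdlw : IsLabelWord G L (c.take (j+1)) :=
      isLabelWord_prefix ⟨μ, hμlab⟩ (List.take_prefix _ c) hdne
    have hDB : Bbar G L (relRng G L A (c.take (j+1))) := Bbar.rel A _ hA hdlw
    have hDne : (relRng G L A (c.take (j+1))).Nonempty := by
      refine ⟨(μ.gtake (j+1) (by omega)).range, μ.gtake (j+1) (by omega), ?_, ?_, rfl⟩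
      · rw [GPath.gtake_label, hμlab]
      · rw [GPath.gtake_source]; exact hμsrc
    have htk1ne : β.take (j+1) ≠ [] := by
      rw [ne_eq, List.take_eq_nil_iff]; push_neg; exact ⟨by omega, hβne⟩
    have htk1lw : IsLabelWord G L (β.take (j+1)) :=
      isLabelWord_prefix hβlw (List.take_prefix _ β) htk1ne
    have hBtake1 : Bbar G L (rr G L A (β.take (j+1))) := bbar_rr hA (Or.inr htk1lw)
    have hpair := ck_ge_pair rep hL sa hBu0 hbj_emit hcj_emit' (Ne.symm hget)
    have h1 : relRng G L (rr G L A (β.take j)) [β.get ⟨j, hj2⟩]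
        = rr G L A (β.take (j+1)) := by
      rw [← relRng_snoc A (β.take j) _, hbeq, rr_ne htk1ne]
    have h2 : relRng G L (rr G L A (β.take j)) [c.get ⟨j, hj1⟩]
        = relRng G L A (c.take (j+1)) := by
      rw [← relRng_snoc A (β.take j) _, hdeq]
    rw [h1, h2] at hpair
    have h3 := conj0_le_of_le rep hL sa hA (β.take j) hpair
    rw [conj0_add, ← conj0_snoc, ← conj0_snoc, hbeq, hdeq] at h3
    have h4 : conj0 rep.s β (rep.p A)
        ≤ conj0 rep.s (β.take (j+1)) (rep.p (rr G L A (β.take (j+1)))) := by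
      have hsplit : β.take (j+1) ++ β.drop (j+1) = β := List.take_append_drop _ _
      rcases eq_or_ne (β.drop (j+1)) [] with hdr | hdr
      · have htk : β.take (j+1) = β :=
          List.take_of_length_le (by
            have := List.drop_eq_nil_iff.mp hdr
            omega)
        rw [htk, rr_ne hβne, ← hstep1]
      · have hArr : rr G L (rr G L A (β.take (j+1))) (β.drop (j+1)) = A := by
          rw [← rr_append A hdr, hsplit, rr_ne hβne, ← hstep1]
        calc conj0 rep.s β (rep.p A)
            = conj0 rep.s (β.take (j+1))
                (conj0 rep.s (β.drop (j+1)) (rep.p A)) := by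
              rw [← conj0_append, hsplit]
          _ ≤ conj0 rep.s (β.take (j+1)) (rep.p (rr G L A (β.take (j+1)))) := by
              apply conj0_mono
              have := conj0_rr_le rep hL sa (β.drop (j+1)) hBtake1
              rwa [hArr] at this
    have hkey : conj0 rep.s β (rep.p A)
        + conj0 rep.s (c.take (j+1)) (rep.p (relRng G L A (c.take (j+1))))
        ≤ rep.p A := by
      calc conj0 rep.s β (rep.p A)
            + conj0 rep.s (c.take (j+1)) (rep.p (relRng G L A (c.take (j+1))))
          ≤ conj0 rep.s (β.take (j+1)) (rep.p (rr G L A (β.take (j+1))))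
            + conj0 rep.s (c.take (j+1)) (rep.p (relRng G L A (c.take (j+1)))) :=
            add_le_add_left h4 _
        _ ≤ rep.p A := h3
    -- build an infinite projection at p A
    apply hfin A hA
    refine ⟨rep.p_sa A hA, p_proj rep hA, sWord rep.s β * rep.p A,
      hiso β hβlw A hA hAsub_rngW, ?_, ?_⟩
    · rw [hconj β hβne A hA]
      have := conj0_rr_le rep hL sa β hA
      rwa [rr_ne hβne, ← hstep1] at this
    · intro heq
      rw [hconj β hβne A hA] at heq
      have h5 : conj0 rep.s (c.take (j+1)) (rep.p (relRng G L A (c.take (j+1)))) ≤ 0 := by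
        have h6 := hkey
        rw [heq] at h6
        have h7 := sub_le_sub_right h6 (rep.p A)
        simpa using h7
      have h6 : conj0 rep.s (c.take (j+1)) (rep.p (relRng G L A (c.take (j+1)))) = 0 :=
        le_antisymm h5 (conj0_nonneg rep.s _ (p_nonneg rep hDB))
      have hy : (sWord rep.s (c.take (j+1)) * rep.p (relRng G L A (c.take (j+1))))
          * star (sWord rep.s (c.take (j+1)) * rep.p (relRng G L A (c.take (j+1)))) = 0 := by
        rw [hconj (c.take (j+1)) hdne _ hDB]
        exact h6
      have hynorm : ‖sWord rep.s (c.take (j+1)) * rep.p (relRng G L A (c.take (j+1)))‖ = 0 := by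
        have h8 := CStarRing.norm_self_mul_star
          (x := sWord rep.s (c.take (j+1)) * rep.p (relRng G L A (c.take (j+1))))
        rw [hy, norm_zero] at h8
        exact (mul_self_eq_zero.mp h8.symm)
      have hy0 : sWord rep.s (c.take (j+1)) * rep.p (relRng G L A (c.take (j+1))) = 0 :=
        norm_eq_zero.mp hynorm
      have h9 := hiso (c.take (j+1)) hdlw _ hDB (relRng_subset_rngW A _)
      rw [hy0] at h9
      simp only [star_zero, mul_zero, zero_mul] at h9
      exact hp _ hDB hDne h9.symm
  -- Step 3: combinatorics
  have wordPow_zero : wordPow β 0 = [] := rfl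
  have wordPow_succ : ∀ (k : ℕ), wordPow β (k+1) = β ++ wordPow β k := by
    intro k; simp [wordPow, List.replicate_succ]
  have backward : ∀ (k : ℕ) (α' : List 𝒜), α' ≠ [] → α' <+: β →
      ∃ ρ : GPath G, ρ.label L = wordPow β k ++ α' ∧ ρ.source ∈ A := by
    intro k
    induction k with
    | zero =>
      intro α' h1 h2
      have hlen' : α'.length ≠ 0 := by simpa using h1
      refine ⟨ν.gtake α'.length hlen', ?_, ?_⟩
      · rw [GPath.gtake_label, hνlab, ← List.prefix_iff_eq_take.mp h2,
          wordPow_zero, List.nil_append]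
      · rw [GPath.gtake_source]; exact hνsrc
    | succ k ih =>
      intro α' h1 h2
      obtain ⟨ρ, hρlab, hρsrc⟩ := ih α' h1 h2
      obtain ⟨σ, hσlab, hσsrc, hσrng⟩ := hsub hρsrc
      refine ⟨σ.gappend ρ hσrng, ?_, ?_⟩
      · rw [GPath.gappend_label, hσlab, hρlab, wordPow_succ, List.append_assoc]
      · rw [GPath.gappend_source]; exact hσsrc
  have forward : ∀ (n : ℕ) (w : List 𝒜), w.length ≤ n →
      (∃ ρ : GPath G, ρ.source ∈ A ∧ ρ.label L = w) →
      ∃ (k : ℕ) (α' : List 𝒜), α' ≠ [] ∧ α' <+: β ∧ w = wordPow β k ++ α' := by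
    intro n
    induction n with
    | zero =>
      rintro w hw ⟨ρ, _, hρlab⟩
      have hne0 := ρ.label_ne_nil L
      rw [hρlab] at hne0
      exact absurd (List.length_eq_zero_iff.mp (Nat.le_zero.mp hw)) hne0
    | succ n ih =>
      rintro w hw ⟨ρ, hρsrc, hρlab⟩
      have hρlen : ρ.length = w.length := by rw [← ρ.label_length L, hρlab]
      have hwne : w ≠ [] := by rw [← hρlab]; exact ρ.label_ne_nil L
      rcases le_or_gt w.length β.length with hle | hgt
      · exact ⟨0, w, hwne, hpref w hwne hle ⟨ρ, hρlab, hρsrc⟩,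
          by rw [wordPow_zero, List.nil_append]⟩
      · have hblt : β.length < ρ.length := by omega
        have hbne0 : β.length ≠ 0 := by omega
        have hqlab : (ρ.gtake β.length hbne0).label L = w.take β.length := by
          rw [GPath.gtake_label, hρlab]
        have htklen : (w.take β.length).length = β.length := by
          rw [List.length_take]; omega
        have htkne : w.take β.length ≠ [] := by
          rw [ne_eq, List.take_eq_nil_iff]; push_neg; exact ⟨by omega, hwne⟩
        have hqpre : w.take β.length <+: β :=
          hpref _ htkne (le_of_eq htklen)
            ⟨ρ.gtake β.length hbne0, hqlab, by rw [GPath.gtake_source]; exact hρsrc⟩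
        have hqeq : w.take β.length = β := hqpre.eq_of_length htklen
        have hqrng : (ρ.gtake β.length hbne0).range ∈ A := by
          rw [hstep1]
          exact ⟨ρ.gtake β.length hbne0, by rw [hqlab, hqeq],
            by rw [GPath.gtake_source]; exact hρsrc, rfl⟩
        obtain ⟨k, α', h1, h2, h3⟩ := ih (w.drop β.length)
          (by rw [List.length_drop]; omega)
          ⟨ρ.gdrop β.length hblt,
            by rw [GPath.gdrop_source ρ _ hblt hbne0]; exact hqrng,
            by rw [GPath.gdrop_label, hρlab]⟩
        refine ⟨k+1, α', h1, h2, ?_⟩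
        rw [wordPow_succ, List.append_assoc, ← h3]
        rw [show β ++ w.drop β.length = w.take β.length ++ w.drop β.length from by
          rw [hqeq]]
        rw [List.take_append_drop]
  refine ⟨β, ⟨⟨ν, hνlab, hνsrc, hνrng⟩, hsub⟩, hstep1, ?_⟩
  ext w
  constructor
  · rintro ⟨ρ, hρsrc, _, hρlab⟩
    exact forward w.length w le_rfl ⟨ρ, hρsrc, hρlab⟩
  · rintro ⟨k, α', h1, h2, rfl⟩
    obtain ⟨ρ, hρlab, hρsrc⟩ := backward k α' h1 h2
    exact ⟨ρ, hρsrc, ρ.one_le_length, hρlab⟩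

end
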